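/- Let (T, Q) be a tree-decomposition of the intersection graph of an instance of problem GB, and let x̂ ∈ {0,1}^n be GB-feasible. Define λ̂^t_v = 1 if v is the restriction of x̂ to Q_t and λ̂^t_v = 0 for all other v ∈ F_t, and define Ẑ_S = 1 if x̂_j = 1 for all j ∈ S and Ẑ_S = 0 otherwise (for each S contained in some Q_t). Then (Ẑ, λ̂) is a feasible solution of LPz, and for every cost vector c ∈ ℝ^n, Σ_{j=1}^n c_j Ẑ_{{j}} = Σ_{j=1}^n c_j x̂_j. -/

import Mathlib

open Finset

/-- The real value of a Boolean (0 or 1). -/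
def bval (b : Bool) : ℝ := if b then 1 else 0

/-- Restriction of a 0/1 vector on `Fin n` to the coordinates in `A`. -/
def restr {n : ℕ} (x : Fin n → Bool) (A : Finset (Fin n)) : {j // j ∈ A} → Bool :=
  fun j => x j.val

/-- GB-feasibility: the restriction of `x` to each constraint support `K i` lies in `Sc i`. -/
def GBFeas {n m : ℕ} (K : Fin m → Finset (Fin n))
    (Sc : ∀ i : Fin m, Set ({j // j ∈ K i} → Bool)) (x : Fin n → Bool) : Prop :=
  ∀ i, restr x (K i) ∈ Sc i

/-- The intersection graph of a GB instance. -/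
def interGraph {n m : ℕ} (K : Fin m → Finset (Fin n)) : SimpleGraph (Fin n) where
  Adj j k := j ≠ k ∧ ∃ i, j ∈ K i ∧ k ∈ K i
  symm := by
    constructor
    rintro j k ⟨hne, i, hj, hk⟩
    exact ⟨hne.symm, i, hk, hj⟩
  loopless := by
    constructor
    rintro j ⟨hne, -⟩
    exact hne rfl

/-- Tree-decomposition of a graph `H`: `T` is a finite tree, every vertex of `H` appears in a
set of bags inducing a (nonempty) connected subgraph of `T`, and each edge of `H` is contained
in some bag. -/
def IsTreeDecomp {V τ : Type} (H : SimpleGraph V) (T : SimpleGraph τ) (Q : τ → Finset V) : Prop :=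
  T.IsTree ∧ (∀ v : V, (T.induce {t | v ∈ Q t}).Connected) ∧
    (∀ u v : V, H.Adj u v → ∃ t, u ∈ Q t ∧ v ∈ Q t)

/-- `F t`: 0/1 vectors on `Q t` (canonically extended by `false` off `Q t`), satisfying every
constraint whose support is contained in `Q t`. -/
def Ffeas {n m : ℕ} {τ : Type} (K : Fin m → Finset (Fin n))
    (Sc : ∀ i : Fin m, Set ({j // j ∈ K i} → Bool)) (Q : τ → Finset (Fin n)) (t : τ) :
    Set (Fin n → Bool) :=
  {v | (∀ j, j ∉ Q t → v j = false) ∧ ∀ i, K i ⊆ Q t → restr v (K i) ∈ Sc i}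

/-- `Ω t`: pairs `(Y, N)` of disjoint subsets of `Q t` such that either `|Y| ≤ 1` and `N = ∅`,
or `(Y, N)` is a partition of `Q t ∩ Q t'` for some neighbor `t'` of `t` in `T`. -/
def Omega {n : ℕ} {τ : Type} (T : SimpleGraph τ) (Q : τ → Finset (Fin n)) (t : τ) :
    Set (Finset (Fin n) × Finset (Fin n)) :=
  {YN | Disjoint YN.1 YN.2 ∧ YN.1 ∪ YN.2 ⊆ Q t ∧
    ((YN.1.card ≤ 1 ∧ YN.2 = ∅) ∨ ∃ t', T.Adj t t' ∧ YN.1 ∪ YN.2 = Q t ∩ Q t')}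

/-- Feasibility for the linear system LP-GB (λ-variables are extended by `0` off `F t`). -/
def LPGBFeas {n m : ℕ} {τ : Type} (K : Fin m → Finset (Fin n))
    (Sc : ∀ i : Fin m, Set ({j // j ∈ K i} → Bool))
    (T : SimpleGraph τ) (Q : τ → Finset (Fin n))
    (X : Finset (Fin n) × Finset (Fin n) → ℝ) (lam : τ → (Fin n → Bool) → ℝ) : Prop :=
  (∀ t v, v ∉ Ffeas K Sc Q t → lam t v = 0) ∧
  (∀ t v, 0 ≤ lam t v) ∧
  (∀ t, ∑ v : Fin n → Bool, lam t v = 1) ∧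
  (∀ t, ∀ YN ∈ Omega T Q t,
    X YN = ∑ v : Fin n → Bool,
      lam t v * (∏ j ∈ YN.1, bval (v j)) * (∏ j ∈ YN.2, (1 - bval (v j))))

/-- Feasibility for the linear system LPz (λ-variables are extended by `0` off `F t`). -/
def LPzFeas {n m : ℕ} {τ : Type} (K : Fin m → Finset (Fin n))
    (Sc : ∀ i : Fin m, Set ({j // j ∈ K i} → Bool))
    (T : SimpleGraph τ) (Q : τ → Finset (Fin n))
    (Z : Finset (Fin n) → ℝ) (lam : τ → (Fin n → Bool) → ℝ) : Prop :=
  (∀ t v, v ∉ Ffeas K Sc Q t → lam t v = 0) ∧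
  (∀ t v, 0 ≤ lam t v) ∧
  (∀ t, ∑ v : Fin n → Bool, lam t v = 1) ∧
  (∀ t, ∀ S : Finset (Fin n), S ⊆ Q t →
    Z S = ∑ v ∈ Finset.univ.filter (fun v : Fin n → Bool => ∀ j ∈ S, v j = true), lam t v)

/-- LPz is a relaxation of GB. A GB-feasible 0/1 vector `xh` yields a feasible
solution `(Zhat, lamhat)` of LPz with the same objective value for every cost vector. -/
theorem lpz_relaxation
    {n m : ℕ} {τ : Type} [Fintype τ] (K : Fin m → Finset (Fin n))
    (Sc : ∀ i : Fin m, Set ({j // j ∈ K i} → Bool))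
    (T : SimpleGraph τ) (Q : τ → Finset (Fin n))
    (hTD : IsTreeDecomp (interGraph K) T Q)
    (xh : Fin n → Bool) (hx : GBFeas K Sc xh) :
    LPzFeas K Sc T Q
      (fun S : Finset (Fin n) => if ∀ j ∈ S, xh j = true then (1 : ℝ) else 0)
      (fun t v => if v = (fun j => if j ∈ Q t then xh j else false) then (1 : ℝ) else 0) ∧
    ∀ c : Fin n → ℝ,
      (∑ j, c j * (if ∀ j' ∈ ({j} : Finset (Fin n)), xh j' = true then (1 : ℝ) else 0)) =
        ∑ j, c j * bval (xh j) := by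
  constructor
  · refine ⟨?_, ?_, ?_, ?_⟩
    · intro t v hv
      dsimp only
      rw [if_neg]
      intro h
      subst h
      refine hv ⟨fun j hj => if_neg hj, fun i hK => ?_⟩
      have hr : restr (fun j => if j ∈ Q t then xh j else false) (K i) = restr xh (K i) := by
        funext j
        simp [restr, if_pos (hK j.2)]
      rw [hr]
      exact hx i
    · intro t v
      dsimp only
      split <;> norm_num
    · intro t
      simp
    · intro t S hS
      have key := Finset.sum_ite_eq'
        (Finset.univ.filter (fun v : Fin n → Bool => ∀ j ∈ S, v j = true))
        (fun j => if j ∈ Q t then xh j else false) (fun _ => (1:ℝ))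
      dsimp only
      rw [key]
      by_cases h : ∀ j ∈ S, xh j = true
      · rw [if_pos h, if_pos]
        refine Finset.mem_filter.mpr ⟨Finset.mem_univ _, fun j hj => ?_⟩
        show (if j ∈ Q t then xh j else false) = true
        rw [if_pos (hS hj)]
        exact h j hj
      · rw [if_neg h, if_neg]
        intro hmem
        refine h fun j hj => ?_
        have h2 : (if j ∈ Q t then xh j else false) = true := (Finset.mem_filter.mp hmem).2 j hj
        rwa [if_pos (hS hj)] at h2
  · intro c
    refine Finset.sum_congr rfl fun j _ => ?_
    by_cases h : xh j = true <;> simp [h, bval]
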